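/- Let A be a surrounding-oriented MPFS algorithm for OFAL(S,1) with |S| = k, σ = r_1⋯r_k a request sequence of full length, i an index and s ∈ F_{i−1}(A) with s ≠ s_A(r_i;σ), and suppose no server of F_{i−1}(A) lies strictly between s_A(r_i;σ) and s. Let t*, a_t, h_t (i ≤ t ≤ t*) be as given by the singleton-difference lemma for the hybrid H_{i,s}. Then for each i ≤ t ≤ t*, no server of F_t(A) ∪ F_t(H_{i,s}) other than a_t and h_t lies strictly between a_t and h_t, and either a_{t*} ≤ ⋯ ≤ a_{i+1} ≤ a_i < h_i ≤ h_{i+1} ≤ ⋯ ≤ h_{t*} or h_{t*} ≤ ⋯ ≤ h_{i+1} ≤ h_i < a_i ≤ a_{i+1} ≤ ⋯ ≤ a_{t*}. -/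

import Mathlib

noncomputable section

namespace OFAL

/-! ### Basic model: servers are points of the real line, given as a `Finset ℝ`. -/

/-- Decrease the remaining capacity of server `m` by one. -/
def decCap (c : ℝ → ℕ) (m : ℝ) : ℝ → ℕ := fun x => if x = m then c x - 1 else c x

/-- Remaining capacities after a list of matches. -/
def useCaps : (ℝ → ℕ) → List ℝ → (ℝ → ℕ)
  | c, [] => c
  | c, m :: ms => useCaps (decCap c m) ms

/-- The set of servers that are still free. -/
def freeOf (S : Finset ℝ) (c : ℝ → ℕ) : Finset ℝ := S.filter fun x => 0 < c x

/-- Run an algorithm given by a choice function `f` (mapping the position of the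
current request and the current set of free servers to the chosen server)
on a request sequence, producing the list of matched servers. -/
def runC (S : Finset ℝ) (f : ℝ → Finset ℝ → ℝ) : (ℝ → ℕ) → List ℝ → List ℝ
  | _, [] => []
  | c, r :: rs => f r (freeOf S c) :: runC S f (decCap c (f r (freeOf S c))) rs

/-- The server with which the algorithm matches the `i`-th request (0-indexed). -/
def mtch (S : Finset ℝ) (f : ℝ → Finset ℝ → ℝ) (c : ℝ → ℕ) (σ : List ℝ) (i : ℕ) : ℝ :=
  (runC S f c σ).getD i 0

/-- Total cost incurred by the algorithm on a request sequence. -/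
def algCost (S : Finset ℝ) (f : ℝ → Finset ℝ → ℝ) (c : ℝ → ℕ) (σ : List ℝ) : ℝ :=
  ((σ.zip (runC S f c σ)).map fun p => |p.1 - p.2|).sum

def totalCap (S : Finset ℝ) (c : ℝ → ℕ) : ℕ := ∑ x ∈ S, c x

/-- A valid request sequence: at most as many requests as total capacity. -/
def ValidSeq (S : Finset ℝ) (c : ℝ → ℕ) (σ : List ℝ) : Prop := σ.length ≤ totalCap S c

/-- A valid (offline) assignment of requests to servers. -/
def ValidAssign (S : Finset ℝ) (c : ℝ → ℕ) (σ : List ℝ) (m : ℕ → ℝ) : Prop :=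
  (∀ i < σ.length, m i ∈ S) ∧
  ∀ x ∈ S, ((List.range σ.length).filter fun i => m i = x).length ≤ c x

def assignCost (σ : List ℝ) (m : ℕ → ℝ) : ℝ :=
  ∑ i ∈ Finset.range σ.length, |σ.getD i 0 - m i|

/-- Cost of an optimal offline assignment. -/
def Opt (S : Finset ℝ) (c : ℝ → ℕ) (σ : List ℝ) : ℝ :=
  sInf { t | ∃ m, ValidAssign S c σ m ∧ assignCost σ m = t }

/-- Unit capacities. -/
def c1 : ℝ → ℕ := fun _ => 1

/-- The set of servers still free after the first `t` matches of `ms`. -/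
def freeAfter (S : Finset ℝ) (c : ℝ → ℕ) (ms : List ℝ) (t : ℕ) : Finset ℝ :=
  S.filter fun x => (ms.take t).count x < c x

/-! ### MPFS algorithms -/

/-- A choice function is an MPFS algorithm if it is given by a family of linear
orders (priorities, encoded by an injective rank function) on the servers, one for
each request position, and selects the free server with the highest priority. -/
def IsMPFS (S : Finset ℝ) (f : ℝ → Finset ℝ → ℝ) : Prop :=
  ∃ rank : ℝ → ℝ → ℕ,
    (∀ r : ℝ, Set.InjOn (rank r) (S : Set ℝ)) ∧
    ∀ (r : ℝ) (F : Finset ℝ), F ⊆ S → F.Nonempty →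
      f r F ∈ F ∧ ∀ y ∈ F, rank r (f r F) ≤ rank r y

/-! ### Geometry of the server layout -/

/-- `a` and `b` are adjacent servers of `T` with `a < b`. -/
def IsGapPair (T : Finset ℝ) (a b : ℝ) : Prop :=
  a ∈ T ∧ b ∈ T ∧ a < b ∧ ∀ x ∈ T, x ≤ a ∨ b ≤ x

/-- The maximum distance between two adjacent servers. -/
def maxGap (T : Finset ℝ) : ℝ := sSup { d | ∃ a b, IsGapPair T a b ∧ d = b - a }

/-- The minimum distance between two adjacent servers. -/
def minGap (T : Finset ℝ) : ℝ := sInf { d | ∃ a b, IsGapPair T a b ∧ d = b - a }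

/-- `L(T)`: the ratio of the diameter of `T` to its maximum gap (0 if `|T| ≤ 1`). -/
def Lval (T : Finset ℝ) : ℝ :=
  if 2 ≤ T.card then (sSup (T : Set ℝ) - sInf (T : Set ℝ)) / maxGap T else 0

/-- `α(S) = max_{T ⊆ S} L(T)`. -/
def alpha (S : Finset ℝ) : ℝ :=
  (S.powerset.image Lval).max'
    ⟨Lval ∅, Finset.mem_image_of_mem _ (Finset.empty_mem_powerset S)⟩

/-- The aspect ratio `U(S)`: diameter over minimum gap. -/
def Uval (S : Finset ℝ) : ℝ := (sSup (S : Set ℝ) - sInf (S : Set ℝ)) / minGap S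

/-! ### Surrounding servers -/

/-- `x` is a surrounding server of a request at `r` among the free servers `F`. -/
def IsSurrounding (F : Finset ℝ) (r x : ℝ) : Prop :=
  x ∈ F ∧
    (if r ∈ F then x = r
     else (x < r ∧ ∀ y ∈ F, y ≤ x ∨ r < y) ∨ (r < x ∧ ∀ y ∈ F, y < r ∨ x ≤ y))

/-- No element of `F` lies strictly between `u` and `v`. -/
def NoFreeBetween (F : Finset ℝ) (u v : ℝ) : Prop :=
  ∀ y ∈ F, ¬ (min u v < y ∧ y < max u v)

/-- A choice-function algorithm is surrounding-oriented if on every request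
sequence it matches every request with one of its surrounding servers. -/
def SurrOriented (S : Finset ℝ) (f : ℝ → Finset ℝ → ℝ) : Prop :=
  ∀ (c : ℝ → ℕ) (σ : List ℝ), ValidSeq S c σ → ∀ i < σ.length,
    IsSurrounding (freeAfter S c (runC S f c σ) i) (σ.getD i 0) (mtch S f c σ i)

/-! ### Faithful algorithms -/

/-- `τ` is closer than `σ` with respect to the algorithm. -/
def Closer (S : Finset ℝ) (f : ℝ → Finset ℝ → ℝ) (c : ℝ → ℕ) (σ τ : List ℝ) : Prop :=
  τ.length = σ.length ∧
  (∀ i < σ.length, τ.getD i 0 ∈ Set.uIcc (σ.getD i 0) (mtch S f c σ i)) ∧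
  ∃ i < σ.length, |τ.getD i 0 - mtch S f c σ i| < |σ.getD i 0 - mtch S f c σ i|

/-- A faithful algorithm matches a closer request sequence with the same servers. -/
def FaithfulC (S : Finset ℝ) (f : ℝ → Finset ℝ → ℝ) : Prop :=
  ∀ (c : ℝ → ℕ) (σ τ : List ℝ), ValidSeq S c σ → Closer S f c σ τ →
    ∀ i < σ.length, mtch S f c τ i = mtch S f c σ i

/-- `σ` is opposite w.r.t. the algorithm: there is an optimal assignment `m` such
that every request lies between its online server and its offline server. -/
def OppositeC (S : Finset ℝ) (f : ℝ → Finset ℝ → ℝ) (c : ℝ → ℕ) (σ : List ℝ) : Prop :=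
  ∃ m : ℕ → ℝ, ValidAssign S c σ m ∧ assignCost σ m = Opt S c σ ∧
    ∀ i < σ.length, σ.getD i 0 ∈ Set.uIcc (mtch S f c σ i) (m i)

/-! ### Hybrid algorithms (unit capacities) -/

/-- The list of matches of the hybrid algorithm `H_{i,s}` (with `i` 1-indexed):
the first `i-1` requests are matched as by the algorithm, the `i`-th is matched
with `s`, and the rest are matched by the algorithm's choice function. -/
def hybridRun (S : Finset ℝ) (f : ℝ → Finset ℝ → ℝ) (c : ℝ → ℕ)
    (σ : List ℝ) (i : ℕ) (s : ℝ) : List ℝ :=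
  runC S f c (σ.take (i-1)) ++
    s :: runC S f (decCap (useCaps c (runC S f c (σ.take (i-1)))) s) (σ.drop i)

/-- The data produced by the singleton-difference lemma for the hybrid `H_{i,s}`:
for `i ≤ t ≤ t*` the free sets of `A` and of `H_{i,s}` differ exactly by the
singletons `{a t}` and `{h t}`, and they agree for `t ≥ t* + 1`. -/
def HybridData (S : Finset ℝ) (f : ℝ → Finset ℝ → ℝ) (σ : List ℝ)
    (i : ℕ) (s : ℝ) (tstar : ℕ) (a h : ℕ → ℝ) : Prop :=
  i ≤ tstar ∧ tstar + 1 ≤ S.card ∧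
  a i = s ∧ h i = mtch S f c1 σ (i-1) ∧
  (∀ t, i ≤ t → t ≤ tstar →
    freeAfter S c1 (runC S f c1 σ) t \ freeAfter S c1 (hybridRun S f c1 σ i s) t = {a t} ∧
    freeAfter S c1 (hybridRun S f c1 σ i s) t \ freeAfter S c1 (runC S f c1 σ) t = {h t}) ∧
  ∀ t, tstar + 1 ≤ t →
    freeAfter S c1 (runC S f c1 σ) t = freeAfter S c1 (hybridRun S f c1 σ i s) t

/-! ### The condition `C(A,T)` -/

/-- Condition (C3). -/
def C3 (S : Finset ℝ) (f : ℝ → Finset ℝ → ℝ) : Prop :=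
  2 ≤ S.card →
  ∀ σ : List ℝ, σ.length = S.card →
  ∀ i, 1 ≤ i → i ≤ S.card →
  ∀ s ∈ freeAfter S c1 (runC S f c1 σ) (i-1),
    s ≠ mtch S f c1 σ (i-1) →
    (IsSurrounding (freeAfter S c1 (runC S f c1 σ) (i-1)) (σ.getD (i-1) 0) s ∨
      ((∃! x, IsSurrounding (freeAfter S c1 (runC S f c1 σ) (i-1)) (σ.getD (i-1) 0) x) ∧
        NoFreeBetween (freeAfter S c1 (runC S f c1 σ) (i-1)) s (mtch S f c1 σ (i-1)))) →
    ∀ tstar a h, HybridData S f σ i s tstar a h →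
      |h tstar - σ.getD (i-1) 0| ≤ alpha S * |σ.getD (i-1) 0 - a i|

/-- The condition `C(A,S)`: faithful, surrounding-oriented, and (C3). -/
def CProp (S : Finset ℝ) (f : ℝ → Finset ℝ → ℝ) : Prop :=
  FaithfulC S f ∧ SurrOriented S f ∧ C3 S f

/-! ### The PTCP algorithm -/

/-- The critical point offset `x = D(Δ₂+D)/(Δ₁+Δ₂+2D)`. -/
def ptcpX (S : Finset ℝ) (sa sb : ℝ) : ℝ :=
  (sb - sa) * ((sSup (S : Set ℝ) - sb) + (sb - sa)) /
    ((sa - sInf (S : Set ℝ)) + (sSup (S : Set ℝ) - sb) + 2 * (sb - sa))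

/-- `IsPTCP S f` holds iff `f` behaves (on nonempty sets of free servers of `S`)
like the recursively defined algorithm PTCP: split `S` at (some) maximum gap
`(sa, sb)` into `S₁` and `S₂`, requests at most `sa + x` preferring `S₁`,
requests beyond preferring `S₂`. -/
inductive IsPTCP : Finset ℝ → (ℝ → Finset ℝ → ℝ) → Prop
  | single (s : ℝ) (f : ℝ → Finset ℝ → ℝ)
      (h : ∀ (r : ℝ) (F : Finset ℝ), F ⊆ ({s} : Finset ℝ) → F.Nonempty → f r F = s) :
      IsPTCP {s} f
  | split (S : Finset ℝ) (f f₁ f₂ : ℝ → Finset ℝ → ℝ) (sa sb : ℝ)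
      (hcard : 2 ≤ S.card) (hsa : sa ∈ S) (hsb : sb ∈ S) (hlt : sa < sb)
      (hadj : ∀ x ∈ S, x ≤ sa ∨ sb ≤ x)
      (hmax : sb - sa = maxGap S)
      (h1 : IsPTCP (S.filter (· ≤ sa)) f₁)
      (h2 : IsPTCP (S.filter (sb ≤ ·)) f₂)
      (hf : ∀ (r : ℝ) (F : Finset ℝ), F ⊆ S → F.Nonempty →
        f r F =
          if ¬(F.filter (sb ≤ ·)).Nonempty ∨
             (r ≤ sa + ptcpX S sa sb ∧ (F.filter (· ≤ sa)).Nonempty)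
          then f₁ r (F.filter (· ≤ sa))
          else f₂ r (F.filter (sb ≤ ·))) :
      IsPTCP S f

/-! ### The extended algorithm `A_{d,x}` -/

/-- The algorithm `A_{d,x}`: requests at most `sk + x` are served by `A` on `S`
(except when all of `S` is full, then by `s_{k+1}`), requests beyond `sk + x`
are served by `s_{k+1}` (except when it is full, then by `A` on `S`). -/
def extChoice (S : Finset ℝ) (f : ℝ → Finset ℝ → ℝ) (sk skp1 x : ℝ) :
    ℝ → Finset ℝ → ℝ :=
  fun r F =>
    if r ≤ sk + x then
      (if (F ∩ S).Nonempty then f r (F ∩ S) else skp1)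
    else
      (if skp1 ∈ F then skp1 else f r (F ∩ S))

/-! ### General deterministic online algorithms -/

/-- The server with which the online algorithm `A` (which sees the requests
processed so far and the current request) matches the `i`-th request (0-indexed). -/
def omatch (A : List ℝ → ℝ → ℝ) (σ : List ℝ) (i : ℕ) : ℝ := A (σ.take i) (σ.getD i 0)

def ocost (A : List ℝ → ℝ → ℝ) (σ : List ℝ) : ℝ :=
  ∑ i ∈ Finset.range σ.length, |σ.getD i 0 - omatch A σ i|

/-- The set of servers free for the online algorithm just before the `i`-th request. -/
def ofree (S : Finset ℝ) (c : ℝ → ℕ) (A : List ℝ → ℝ → ℝ) (σ : List ℝ) (i : ℕ) :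
    Finset ℝ :=
  S.filter fun x => ((List.range i).filter fun j => omatch A σ j = x).length < c x

/-- `A` is a (correct) deterministic online algorithm for `OFAL(S,c)`:
it always matches a request with a free server. -/
def IsOnline (S : Finset ℝ) (c : ℝ → ℕ) (A : List ℝ → ℝ → ℝ) : Prop :=
  ∀ σ : List ℝ, ValidSeq S c σ → ∀ i < σ.length, omatch A σ i ∈ ofree S c A σ i

def OSurrOriented (S : Finset ℝ) (c : ℝ → ℕ) (A : List ℝ → ℝ → ℝ) : Prop :=
  ∀ σ : List ℝ, ValidSeq S c σ → ∀ i < σ.length,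
    IsSurrounding (ofree S c A σ i) (σ.getD i 0) (omatch A σ i)

def OCloser (A : List ℝ → ℝ → ℝ) (σ τ : List ℝ) : Prop :=
  τ.length = σ.length ∧
  (∀ i < σ.length, τ.getD i 0 ∈ Set.uIcc (σ.getD i 0) (omatch A σ i)) ∧
  ∃ i < σ.length, |τ.getD i 0 - omatch A σ i| < |σ.getD i 0 - omatch A σ i|

def OFaithful (S : Finset ℝ) (c : ℝ → ℕ) (A : List ℝ → ℝ → ℝ) : Prop :=
  ∀ σ τ : List ℝ, ValidSeq S c σ → OCloser A σ τ →
    ∀ i < σ.length, omatch A τ i = omatch A σ i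

def OOpposite (S : Finset ℝ) (c : ℝ → ℕ) (A : List ℝ → ℝ → ℝ) (σ : List ℝ) : Prop :=
  ∃ m : ℕ → ℝ, ValidAssign S c σ m ∧ assignCost σ m = Opt S c σ ∧
    ∀ i < σ.length, σ.getD i 0 ∈ Set.uIcc (omatch A σ i) (m i)

/-- `Rate(σ) = A(σ)/Opt(σ)`, with the conventions for `Opt(σ) = 0`. -/
def Rate (S : Finset ℝ) (c : ℝ → ℕ) (A : List ℝ → ℝ → ℝ) (σ : List ℝ) : EReal :=
  if 0 < Opt S c σ then (((ocost A σ) / Opt S c σ : ℝ) : EReal)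
  else if 0 < ocost A σ then ⊤ else 1

/-! ### The permutation algorithm -/

/-- An execution of the permutation algorithm on `σ`, producing matches `p`:
there is a chain of minimum-cost assignments of the prefixes whose used server
multisets grow one server at a time, `p i` being the server added at step `i`. -/
def PermExec (S : Finset ℝ) (c : ℝ → ℕ) (σ : List ℝ) (p : ℕ → ℝ) : Prop :=
  ∃ M : ℕ → ℕ → ℝ,
    (∀ i ≤ σ.length,
      ValidAssign S c (σ.take i) (M i) ∧
      assignCost (σ.take i) (M i) = Opt S c (σ.take i)) ∧
    ∀ i < σ.length,
      (((List.range (i+1)).map (M (i+1)) : List ℝ) : Multiset ℝ) =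
        p i ::ₘ (((List.range i).map (M i) : List ℝ) : Multiset ℝ)

def execCost (σ : List ℝ) (p : ℕ → ℝ) : ℝ :=
  ∑ i ∈ Finset.range σ.length, |σ.getD i 0 - p i|


/-! ### Auxiliary lemmas -/

lemma useCaps_apply (c : ℝ → ℕ) (l : List ℝ) (x : ℝ) :
    useCaps c l x = c x - l.count x := by
  induction l generalizing c with
  | nil => simp [useCaps]
  | cons m ms ih =>
    rw [useCaps, ih]
    simp only [decCap, List.count_cons]
    split_ifs <;> simp_all <;> omega

lemma useCaps_append (c : ℝ → ℕ) (l₁ l₂ : List ℝ) :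
    useCaps c (l₁ ++ l₂) = useCaps (useCaps c l₁) l₂ := by
  induction l₁ generalizing c with
  | nil => simp [useCaps]
  | cons m ms ih => simp [useCaps, ih]

lemma runC_length (S : Finset ℝ) (f : ℝ → Finset ℝ → ℝ) (c : ℝ → ℕ) (σ : List ℝ) :
    (runC S f c σ).length = σ.length := by
  induction σ generalizing c with
  | nil => simp [runC]
  | cons r rs ih => simp [runC, ih]

lemma runC_take (S : Finset ℝ) (f : ℝ → Finset ℝ → ℝ) (n : ℕ) (c : ℝ → ℕ) (σ : List ℝ) :
    (runC S f c σ).take n = runC S f c (σ.take n) := by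
  induction n generalizing c σ with
  | zero => simp [runC]
  | succ n ih =>
    cases σ with
    | nil => simp [runC]
    | cons r rs => simp [runC, ih]

lemma runC_getD (S : Finset ℝ) (f : ℝ → Finset ℝ → ℝ) (t : ℕ) (σ : List ℝ) (c : ℝ → ℕ)
    (ht : t < σ.length) :
    (runC S f c σ).getD t 0 =
      f (σ.getD t 0) (freeOf S (useCaps c ((runC S f c σ).take t))) := by
  induction t generalizing σ c with
  | zero =>
    cases σ with
    | nil => simp at ht
    | cons r rs => simp [runC, useCaps]
  | succ t ih =>
    cases σ with
    | nil => simp at ht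
    | cons r rs =>
      simp only [runC, List.getD_cons_succ, List.take_succ_cons, List.getD_cons_succ]
      rw [ih rs _ (by simpa using ht)]
      rfl

lemma freeAfter_freeOf (S : Finset ℝ) (c : ℝ → ℕ) (ms : List ℝ) (t : ℕ) :
    freeAfter S c ms t = freeOf S (useCaps c (ms.take t)) := by
  ext x
  simp only [freeAfter, freeOf, Finset.mem_filter, useCaps_apply]
  exact and_congr_right fun _ => by omega

lemma mem_freeAfter_c1 {S : Finset ℝ} {ms : List ℝ} {t : ℕ} {x : ℝ} :
    x ∈ freeAfter S c1 ms t ↔ x ∈ S ∧ x ∉ ms.take t := by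
  simp [freeAfter, c1, Nat.lt_one_iff, List.count_eq_zero]

lemma freeAfter_subset (S : Finset ℝ) (c : ℝ → ℕ) (ms : List ℝ) (t : ℕ) :
    freeAfter S c ms t ⊆ S := Finset.filter_subset _ _

lemma freeAfter_congr {S : Finset ℝ} {c : ℝ → ℕ} {ms ms' : List ℝ} {t : ℕ}
    (h : ms.take t = ms'.take t) : freeAfter S c ms t = freeAfter S c ms' t := by
  unfold freeAfter; rw [h]

lemma freeAfter_zero (S : Finset ℝ) (c : ℝ → ℕ) (ms : List ℝ) :
    freeAfter S c ms 0 = freeOf S c := by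
  ext x
  unfold freeAfter freeOf
  rw [Finset.mem_filter, Finset.mem_filter]
  simp

lemma freeAfter_succ (S : Finset ℝ) (ms : List ℝ) (t : ℕ) (ht : t < ms.length) :
    freeAfter S c1 ms (t + 1) = (freeAfter S c1 ms t).erase (ms.getD t 0) := by
  have h1 : ms.take (t + 1) = ms.take t ++ [ms.getD t 0] := by
    rw [List.take_succ]
    congr 1
    rw [List.getElem?_eq_getElem ht]
    simp [List.getD_eq_getElem?_getD, List.getElem?_eq_getElem ht]
  ext x
  rw [Finset.mem_erase, mem_freeAfter_c1, mem_freeAfter_c1, h1]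
  simp only [List.mem_append, List.mem_singleton]
  tauto

lemma hybridRun_length (S : Finset ℝ) (f : ℝ → Finset ℝ → ℝ) (c : ℝ → ℕ) (σ : List ℝ)
    (i : ℕ) (s : ℝ) (hi : 1 ≤ i) (hik : i ≤ σ.length) :
    (hybridRun S f c σ i s).length = σ.length := by
  simp only [hybridRun, List.length_append, List.length_cons, runC_length,
    List.length_take, List.length_drop]
  omega

lemma hybridRun_take_pred (S : Finset ℝ) (f : ℝ → Finset ℝ → ℝ) (c : ℝ → ℕ) (σ : List ℝ)
    (i : ℕ) (s : ℝ) (hik : i - 1 ≤ σ.length) :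
    (hybridRun S f c σ i s).take (i - 1) = (runC S f c σ).take (i - 1) := by
  have hP : (runC S f c (σ.take (i - 1))).length = i - 1 := by
    rw [runC_length, List.length_take]; omega
  rw [hybridRun, List.take_left' hP]
  exact (runC_take S f (i - 1) c σ).symm

lemma hybridRun_getD_pred (S : Finset ℝ) (f : ℝ → Finset ℝ → ℝ) (c : ℝ → ℕ) (σ : List ℝ)
    (i : ℕ) (s : ℝ) (hik : i - 1 ≤ σ.length) :
    (hybridRun S f c σ i s).getD (i - 1) 0 = s := by
  have hP : (runC S f c (σ.take (i - 1))).length = i - 1 := by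
    rw [runC_length, List.length_take]; omega
  rw [hybridRun, List.getD_append_right _ _ _ _ (le_of_eq hP), hP]
  simp

lemma hybridRun_getD (S : Finset ℝ) (f : ℝ → Finset ℝ → ℝ) (c : ℝ → ℕ) (σ : List ℝ)
    (i : ℕ) (s : ℝ) (hi : 1 ≤ i) (t : ℕ) (hit : i ≤ t) (ht : t < σ.length) :
    (hybridRun S f c σ i s).getD t 0 =
      f (σ.getD t 0) (freeOf S (useCaps c ((hybridRun S f c σ i s).take t))) := by
  set P := runC S f c (σ.take (i - 1)) with hPdef
  set c' := decCap (useCaps c P) s with hc'def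
  set T := runC S f c' (σ.drop i) with hTdef
  have hP : P.length = i - 1 := by rw [hPdef, runC_length, List.length_take]; omega
  have hHs : hybridRun S f c σ i s = P ++ s :: T := rfl
  have hj : t = (i - 1) + 1 + (t - i) := by omega
  set j := t - i with hjdef
  -- getD
  have h1 : (hybridRun S f c σ i s).getD t 0 = T.getD j 0 := by
    rw [hHs, List.getD_append_right _ _ _ _ (by omega : P.length ≤ t), hP]
    have : t - (i - 1) = j + 1 := by omega
    rw [this, List.getD_cons_succ]
  -- take
  have h2 : (hybridRun S f c σ i s).take t = (P ++ [s]) ++ T.take j := by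
    rw [hHs]
    rw [List.take_append, List.take_of_length_le (by omega : P.length ≤ t), hP]
    have : t - (i - 1) = j + 1 := by omega
    rw [this]
    simp [List.take_succ_cons]
  have h3 : useCaps c ((hybridRun S f c σ i s).take t) = useCaps c' (T.take j) := by
    rw [h2, useCaps_append, useCaps_append]
    congr 1
  have h4 : (σ.drop i).getD j 0 = σ.getD t 0 := by
    conv_rhs => rw [← List.take_append_drop i σ]
    rw [List.getD_append_right _ _ _ _ (by rw [List.length_take]; omega), List.length_take]
    congr 1
    omega
  rw [h1, h3, ← h4, hTdef, runC_getD S f j (σ.drop i) c' (by rw [List.length_drop]; omega),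
    runC_take]


lemma surr_all (S : Finset ℝ) (f : ℝ → Finset ℝ → ℝ) (hsur : SurrOriented S f)
    (F : Finset ℝ) (hFS : F ⊆ S) (hFne : F.Nonempty) (r : ℝ) :
    IsSurrounding F r (f r F) := by
  classical
  set c : ℝ → ℕ := fun x => if x ∈ F then 1 else 0 with hc
  have hfree : freeOf S c = F := by
    ext x
    simp only [freeOf, Finset.mem_filter, hc]
    constructor
    · rintro ⟨-, hx⟩
      by_contra hxF
      simp [hxF] at hx
    · intro hx
      exact ⟨hFS hx, by simp [hx]⟩
  have hvalid : ValidSeq S c [r] := by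
    obtain ⟨x0, hx0⟩ := hFne
    have h1 : c x0 ≤ ∑ x ∈ S, c x :=
      Finset.single_le_sum (fun x _ => Nat.zero_le _) (hFS hx0)
    have h2 : c x0 = 1 := by simp [hc, hx0]
    simp only [ValidSeq, totalCap, List.length_singleton]
    omega
  have h := hsur c [r] hvalid 0 (by simp)
  have hrun : runC S f c [r] = [f r F] := by
    simp [runC, hfree]
  rw [hrun] at h
  simpa [mtch, hrun, freeAfter_zero, hfree] using h

lemma geom (S : Finset ℝ) (f : ℝ → Finset ℝ → ℝ) (rank : ℝ → ℝ → ℕ)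
    (hinj : ∀ r : ℝ, Set.InjOn (rank r) (S : Set ℝ))
    (hmin : ∀ (r : ℝ) (F : Finset ℝ), F ⊆ S → F.Nonempty →
      f r F ∈ F ∧ ∀ y ∈ F, rank r (f r F) ≤ rank r y)
    (hsurr : ∀ (F : Finset ℝ), F ⊆ S → F.Nonempty → ∀ r, IsSurrounding F r (f r F))
    (FA FH : Finset ℝ) (hFAS : FA ⊆ S) (hFHS : FH ⊆ S)
    (a h r : ℝ) (hd1 : FA \ FH = {a}) (hd2 : FH \ FA = {h})
    (hinv : ∀ y ∈ FA ∪ FH, y ≠ a → y ≠ h → ¬(min a h < y ∧ y < max a h))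
    (hfa : f r FA = a) (hfh : f r FH ≠ h) :
    (a < h → f r FH < a ∧ ∀ y ∈ FA ∪ FH, y ≠ f r FH → y ≠ h → y ≠ a →
        ¬(f r FH < y ∧ y < h)) ∧
    (h < a → a < f r FH ∧ ∀ y ∈ FA ∪ FH, y ≠ f r FH → y ≠ h → y ≠ a →
        ¬(h < y ∧ y < f r FH)) := by
  classical
  set x := f r FH with hxdef
  have haFA : a ∈ FA := by
    have : a ∈ FA \ FH := by rw [hd1]; exact Finset.mem_singleton_self a
    exact (Finset.mem_sdiff.1 this).1
  have haFH : a ∉ FH := by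
    have : a ∈ FA \ FH := by rw [hd1]; exact Finset.mem_singleton_self a
    exact (Finset.mem_sdiff.1 this).2
  have hhFH : h ∈ FH := by
    have : h ∈ FH \ FA := by rw [hd2]; exact Finset.mem_singleton_self h
    exact (Finset.mem_sdiff.1 this).1
  have hhFA : h ∉ FA := by
    have : h ∈ FH \ FA := by rw [hd2]; exact Finset.mem_singleton_self h
    exact (Finset.mem_sdiff.1 this).2
  have hFAne : FA.Nonempty := ⟨a, haFA⟩
  have hFHne : FH.Nonempty := ⟨h, hhFH⟩
  obtain ⟨hxFH, hrkx⟩ := hmin r FH hFHS hFHne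
  have hrka : ∀ y ∈ FA, rank r a ≤ rank r y := by
    have := (hmin r FA hFAS hFAne).2
    rwa [hfa] at this
  have hsa : IsSurrounding FA r a := by
    have := hsurr FA hFAS hFAne r
    rwa [hfa] at this
  have hsx : IsSurrounding FH r x := hsurr FH hFHS hFHne r
  have hxFA : x ∈ FA := by
    by_contra hcon
    have : x ∈ FH \ FA := Finset.mem_sdiff.2 ⟨hxFH, hcon⟩
    rw [hd2] at this
    exact hfh (Finset.mem_singleton.1 this)
  have hxa : x ≠ a := fun e => haFH (e ▸ hxFH)
  have hinFH : ∀ y ∈ FA, y ≠ a → y ∈ FH := by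
    intro y hy hne
    by_contra hcon
    exact hne (Finset.mem_singleton.1 (by rw [← hd1]; exact Finset.mem_sdiff.2 ⟨hy, hcon⟩))
  have hinFA : ∀ y ∈ FH, y ≠ h → y ∈ FA := by
    intro y hy hne
    by_contra hcon
    exact hne (Finset.mem_singleton.1 (by rw [← hd2]; exact Finset.mem_sdiff.2 ⟨hy, hcon⟩))
  have hah : a ≠ h := fun e => hhFA (e ▸ haFA)
  have hxnb : ¬(min a h < x ∧ x < max a h) :=
    hinv x (Finset.mem_union_left _ hxFA) hxa hfh
  have hxh : x ≠ h := hfh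
  -- the union trick: on FA ∪ FH the algorithm still picks a
  have hUS : FA ∪ FH ⊆ S := Finset.union_subset hFAS hFHS
  have hUne : (FA ∪ FH).Nonempty := ⟨a, Finset.mem_union_left _ haFA⟩
  have hwa : f r (FA ∪ FH) = a := by
    obtain ⟨hwU, hrkw⟩ := hmin r (FA ∪ FH) hUS hUne
    have h1 : rank r a ≤ rank r (f r (FA ∪ FH)) := by
      rcases Finset.mem_union.1 hwU with hw | hw
      · exact hrka _ hw
      · rcases eq_or_ne (f r (FA ∪ FH)) h with he | hne
        · rw [he]; exact le_trans (hrka x hxFA) (hrkx h hhFH)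
        · exact hrka _ (hinFA _ hw hne)
    exact hinj r (hUS hwU) (hFAS haFA)
      (le_antisymm (hrkw a (Finset.mem_union_left _ haFA)) h1)
  have hsU : IsSurrounding (FA ∪ FH) r a := by
    have := hsurr (FA ∪ FH) hUS hUne r
    rwa [hwa] at this
  obtain ⟨-, hsa2⟩ := hsa
  obtain ⟨-, hsx2⟩ := hsx
  obtain ⟨-, hsU2⟩ := hsU
  by_cases hrFA : r ∈ FA
  · -- then a = r
    rw [if_pos hrFA] at hsa2
    have hrFH : r ∉ FH := hsa2 ▸ haFH
    rw [if_neg hrFH] at hsx2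
    subst hsa2
    rcases hsx2 with ⟨hxr, Hl⟩ | ⟨hrx, Hr⟩
    · -- x < a
      constructor
      · intro hah'
        refine ⟨hxr, ?_⟩
        rintro y hy hyx hyh hya ⟨h1, h2⟩
        have hyFH : y ∈ FH := by
          rcases Finset.mem_union.1 hy with hy' | hy'
          · exact hinFH y hy' hya
          · exact hy'
        rcases Hl y hyFH with h3 | h3
        · linarith
        · exact hinv y hy hya hyh ⟨by rw [min_eq_left hah'.le]; linarith,
            by rw [max_eq_right hah'.le]; linarith⟩
      · intro hah'
        exfalso
        rcases Hl h hhFH with h3 | h3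
        · -- h ≤ x < a : x between h and a
          exact hxnb ⟨by rw [min_eq_right hah'.le]
                         exact lt_of_le_of_ne h3 fun e => hxh e.symm,
                      by rw [max_eq_left hah'.le]; linarith⟩
        · linarith
    · -- a < x
      constructor
      · intro hah'
        exfalso
        rcases Hr h hhFH with h3 | h3
        · linarith
        · exact hxnb ⟨by rw [min_eq_left hah'.le]; linarith,
                      by rw [max_eq_right hah'.le]
                         exact lt_of_le_of_ne h3 hxh⟩
      · intro hah'
        refine ⟨hrx, ?_⟩
        rintro y hy hyx hyh hya ⟨h1, h2⟩
        have hyFH : y ∈ FH := by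
          rcases Finset.mem_union.1 hy with hy' | hy'
          · exact hinFH y hy' hya
          · exact hy'
        rcases Hr y hyFH with h3 | h3
        · exact hinv y hy hya hyh ⟨by rw [min_eq_right hah'.le]; linarith,
            by rw [max_eq_left hah'.le]; linarith⟩
        · linarith
  · rw [if_neg hrFA] at hsa2
    by_cases hrFH : r ∈ FH
    · -- x = r ∈ FH \ FA = {h}, contradiction
      exfalso
      rw [if_pos hrFH] at hsx2
      apply hfh
      rw [hsx2]
      exact Finset.mem_singleton.1 (by rw [← hd2]; exact Finset.mem_sdiff.2 ⟨hrFH, hrFA⟩)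
    · rw [if_neg hrFH] at hsx2
      have hrU : r ∉ FA ∪ FH := by
        simp [Finset.mem_union, hrFA, hrFH]
      rw [if_neg hrU] at hsU2
      rcases hsa2 with ⟨har, Al⟩ | ⟨hra, Ar⟩
      · -- a < r
        rcases hsx2 with ⟨hxr, Hl⟩ | ⟨hrx, Hr⟩
        · -- x < r ; then x ≤ a hence x < a
          have hxa' : x < a := by
            rcases Al x hxFA with h3 | h3
            · exact lt_of_le_of_ne h3 hxa
            · linarith
          constructor
          · intro hah'
            refine ⟨hxa', ?_⟩
            rintro y hy hyx hyh hya ⟨h1, h2⟩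
            have hyFH : y ∈ FH := by
              rcases Finset.mem_union.1 hy with hy' | hy'
              · exact hinFH y hy' hya
              · exact hy'
            rcases Hl y hyFH with h3 | h3
            · linarith
            · exact hinv y hy hya hyh ⟨by rw [min_eq_left hah'.le]; linarith,
                by rw [max_eq_right hah'.le]; linarith⟩
          · intro hah'
            exfalso
            rcases Hl h hhFH with h3 | h3
            · -- h ≤ x, so h < x < a : between
              exact hxnb ⟨by rw [min_eq_right hah'.le]
                             exact lt_of_le_of_ne h3 fun e => hxh e.symm,
                          by rw [max_eq_left hah'.le]; linarith⟩
            · -- r < h ; union trick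
              rcases hsU2 with ⟨_, Ul⟩ | ⟨hra', _⟩
              · rcases Ul h (Finset.mem_union_right _ hhFH) with h4 | h4 <;> linarith
              · linarith
        · -- r < x
          rcases Hr h hhFH with h3 | h3
          · -- h < r ; union trick kills a < h; for h < a we get a < x
            constructor
            · intro hah'
              exfalso
              rcases hsU2 with ⟨_, Ul⟩ | ⟨hra', _⟩
              · rcases Ul h (Finset.mem_union_right _ hhFH) with h4 | h4 <;> linarith
              · linarith
            · intro hah'
              refine ⟨by linarith, ?_⟩
              rintro y hy hyx hyh hya ⟨h1, h2⟩
              have hyFH : y ∈ FH := by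
                rcases Finset.mem_union.1 hy with hy' | hy'
                · exact hinFH y hy' hya
                · exact hy'
              rcases Hr y hyFH with h4 | h4
              · -- y < r : h < y so y between h and a unless a < y
                have hya' : a < y := by
                  by_contra hcon
                  push_neg at hcon
                  exact hinv y hy hya hyh ⟨by rw [min_eq_right hah'.le]; linarith,
                    by rw [max_eq_left hah'.le]; exact lt_of_le_of_ne hcon hya⟩
                rcases Al y (hinFA y hyFH hyh) with h5 | h5 <;> linarith
              · linarith
          · -- x ≤ h : then x < h, so a < r < x ≤ h : x between a and h
            have hxh' : x < h := lt_of_le_of_ne h3 hxh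
            constructor
            · intro hah'
              exfalso
              exact hxnb ⟨by rw [min_eq_left hah'.le]; linarith,
                by rw [max_eq_right hah'.le]; linarith⟩
            · intro hah'
              exfalso
              linarith
      · -- r < a
        rcases hsx2 with ⟨hxr, Hl⟩ | ⟨hrx, Hr⟩
        · -- x < r
          constructor
          · intro hah'
            refine ⟨by linarith, ?_⟩
            rintro y hy hyx hyh hya ⟨h1, h2⟩
            have hyFH : y ∈ FH := by
              rcases Finset.mem_union.1 hy with hy' | hy'
              · exact hinFH y hy' hya
              · exact hy'
            rcases Hl y hyFH with h3 | h3
            · linarith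
            · -- r < y < h ; if y < a then Ar contradiction, else between
              have hya' : y < a := by
                by_contra hcon
                push_neg at hcon
                exact hinv y hy hya hyh ⟨by rw [min_eq_left hah'.le]
                                            exact lt_of_le_of_ne hcon (Ne.symm hya),
                  by rw [max_eq_right hah'.le]; linarith⟩
              rcases Ar y (hinFA y hyFH hyh) with h5 | h5 <;> linarith
          · intro hah'
            exfalso
            rcases Hl h hhFH with h3 | h3
            · -- h ≤ x < r < a : h < x < a between
              exact hxnb ⟨by rw [min_eq_right hah'.le]
                             exact lt_of_le_of_ne h3 fun e => hxh e.symm,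
                          by rw [max_eq_left hah'.le]; linarith⟩
            · -- r < h : union trick
              rcases hsU2 with ⟨har', _⟩ | ⟨_, Ur⟩
              · linarith
              · rcases Ur h (Finset.mem_union_right _ hhFH) with h4 | h4 <;> linarith
        · -- r < x, Ar gives a ≤ x hence a < x
          have hax : a < x := by
            rcases Ar x hxFA with h3 | h3
            · linarith
            · exact lt_of_le_of_ne h3 (Ne.symm hxa)
          constructor
          · intro hah'
            exfalso
            rcases Hr h hhFH with h3 | h3
            · linarith
            · exact hxnb ⟨by rw [min_eq_left hah'.le]; exact hax,
                by rw [max_eq_right hah'.le]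
                   exact lt_of_le_of_ne h3 hxh⟩
          · intro hah'
            refine ⟨hax, ?_⟩
            rintro y hy hyx hyh hya ⟨h1, h2⟩
            have hyFH : y ∈ FH := by
              rcases Finset.mem_union.1 hy with hy' | hy'
              · exact hinFH y hy' hya
              · exact hy'
            rcases Hr y hyFH with h3 | h3
            · -- y < r < a and h < y : y between h and a
              exact hinv y hy hya hyh ⟨by rw [min_eq_right hah'.le]; linarith,
                by rw [max_eq_left hah'.le]; linarith⟩
            · linarith

/-- For a surrounding-oriented MPFS algorithm on the line with
unit capacities, if no free server lies strictly between `s_A(r_i;σ)` and `s`,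
then for every `i ≤ t ≤ t*` no other free server lies strictly between `a_t`
and `h_t`, and the sequences `a` and `h` move monotonically away from each
other. -/
theorem hybrid_no_free_between_and_monotone
    (S : Finset ℝ)
    (f : ℝ → Finset ℝ → ℝ) (hf : IsMPFS S f) (hsur : SurrOriented S f)
    (σ : List ℝ) (hlen : σ.length = S.card)
    (i : ℕ) (hi : 1 ≤ i) (hik : i ≤ S.card)
    (s : ℝ) (hfree : s ∈ freeAfter S c1 (runC S f c1 σ) (i-1))
    (hne : s ≠ mtch S f c1 σ (i-1))
    (hnb : NoFreeBetween (freeAfter S c1 (runC S f c1 σ) (i-1))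
      (mtch S f c1 σ (i-1)) s)
    (tstar : ℕ) (a h : ℕ → ℝ)
    (hdata : HybridData S f σ i s tstar a h) :
    (∀ t, i ≤ t → t ≤ tstar →
      ∀ y ∈ freeAfter S c1 (runC S f c1 σ) t ∪
            freeAfter S c1 (hybridRun S f c1 σ i s) t,
        y ≠ a t → y ≠ h t → ¬ (min (a t) (h t) < y ∧ y < max (a t) (h t))) ∧
    ((a i < h i ∧ ∀ t, i ≤ t → t + 1 ≤ tstar → a (t+1) ≤ a t ∧ h t ≤ h (t+1)) ∨
     (h i < a i ∧ ∀ t, i ≤ t → t + 1 ≤ tstar → h (t+1) ≤ h t ∧ a t ≤ a (t+1))) := by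
  classical
  obtain ⟨rank, hinj, hmin⟩ := hf
  obtain ⟨hit, htk, hai, hhi, hsing, hagree⟩ := hdata
  have hsurr := surr_all S f hsur
  set R := runC S f c1 σ with hR
  set Hs := hybridRun S f c1 σ i s with hHsdef
  have hRlen : R.length = σ.length := runC_length S f c1 σ
  have hHlen : Hs.length = σ.length := by
    rw [hHsdef]; exact hybridRun_length S f c1 σ i s hi (hlen ▸ hik)
  have hmatchA : ∀ t, t < σ.length → R.getD t 0 = f (σ.getD t 0) (freeAfter S c1 R t) := by
    intro t ht
    rw [hR, runC_getD S f t σ c1 ht, ← freeAfter_freeOf]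
  have hmatchH : ∀ t, i ≤ t → t < σ.length →
      Hs.getD t 0 = f (σ.getD t 0) (freeAfter S c1 Hs t) := by
    intro t h1 h2
    rw [hHsdef, hybridRun_getD S f c1 σ i s hi t h1 h2, ← freeAfter_freeOf]
  have hstepA : ∀ t, t < σ.length →
      freeAfter S c1 R (t+1) = (freeAfter S c1 R t).erase (R.getD t 0) := by
    intro t ht
    exact freeAfter_succ S R t (by omega)
  have hstepH : ∀ t, t < σ.length →
      freeAfter S c1 Hs (t+1) = (freeAfter S c1 Hs t).erase (Hs.getD t 0) := by
    intro t ht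
    exact freeAfter_succ S Hs t (by omega)
  have hpred : freeAfter S c1 Hs (i-1) = freeAfter S c1 R (i-1) := by
    apply freeAfter_congr
    rw [hHsdef, hR]
    exact hybridRun_take_pred S f c1 σ i s (by omega)
  have him : i - 1 + 1 = i := by omega
  have hil : i - 1 < σ.length := by omega
  have hFAi : freeAfter S c1 R i = (freeAfter S c1 R (i-1)).erase (mtch S f c1 σ (i-1)) := by
    have h0 := hstepA (i-1) hil
    rw [him] at h0
    rw [h0, hR]
    rfl
  have hFHi : freeAfter S c1 Hs i = (freeAfter S c1 R (i-1)).erase s := by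
    have h0 := hstepH (i-1) hil
    rw [him] at h0
    rw [h0, hpred]
    congr 1
    rw [hHsdef]
    exact hybridRun_getD_pred S f c1 σ i s (by omega)
  have hne' : a i ≠ h i := by rw [hai, hhi]; exact hne
  have hbase : ∀ y ∈ freeAfter S c1 R i ∪ freeAfter S c1 Hs i, y ≠ a i → y ≠ h i →
      ¬(min (a i) (h i) < y ∧ y < max (a i) (h i)) := by
    intro y hy hya hyh hcon
    have hyA : y ∈ freeAfter S c1 R (i-1) := by
      rcases Finset.mem_union.1 hy with hy' | hy'
      · exact Finset.mem_of_mem_erase (hFAi ▸ hy')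
      · exact Finset.mem_of_mem_erase (hFHi ▸ hy')
    have h' := hnb y hyA
    rw [min_comm, max_comm, ← hai, ← hhi] at h'
    exact h' hcon
  have hstep : ∀ t, i ≤ t → t + 1 ≤ tstar →
      (∀ y ∈ freeAfter S c1 R t ∪ freeAfter S c1 Hs t, y ≠ a t → y ≠ h t →
        ¬(min (a t) (h t) < y ∧ y < max (a t) (h t))) →
      ((∀ y ∈ freeAfter S c1 R (t+1) ∪ freeAfter S c1 Hs (t+1), y ≠ a (t+1) → y ≠ h (t+1) →
        ¬(min (a (t+1)) (h (t+1)) < y ∧ y < max (a (t+1)) (h (t+1)))) ∧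
       (a t < h t → a (t+1) ≤ a t ∧ h t ≤ h (t+1) ∧ a (t+1) < h (t+1)) ∧
       (h t < a t → h (t+1) ≤ h t ∧ a t ≤ a (t+1) ∧ h (t+1) < a (t+1))) := by
    intro t h1 h2 hInv
    have ht1 : t < σ.length := by omega
    obtain ⟨e1, e2⟩ := hsing t h1 (by omega)
    obtain ⟨e1', e2'⟩ := hsing (t+1) (by omega) h2
    have hma : a t ∈ freeAfter S c1 R t \ freeAfter S c1 Hs t := by
      rw [e1]; exact Finset.mem_singleton_self _
    have hmh : h t ∈ freeAfter S c1 Hs t \ freeAfter S c1 R t := by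
      rw [e2]; exact Finset.mem_singleton_self _
    obtain ⟨haA, haH⟩ := Finset.mem_sdiff.1 hma
    obtain ⟨hhH, hhA⟩ := Finset.mem_sdiff.1 hmh
    have hchar1 : ∀ y ∈ freeAfter S c1 R t, y ∉ freeAfter S c1 Hs t → y = a t := by
      intro y hy hy'
      exact Finset.mem_singleton.1 (by rw [← e1]; exact Finset.mem_sdiff.2 ⟨hy, hy'⟩)
    have hchar2 : ∀ y ∈ freeAfter S c1 Hs t, y ∉ freeAfter S c1 R t → y = h t := by
      intro y hy hy'
      exact Finset.mem_singleton.1 (by rw [← e2]; exact Finset.mem_sdiff.2 ⟨hy, hy'⟩)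
    obtain ⟨hxAmem, hxArk⟩ :=
      hmin (σ.getD t 0) (freeAfter S c1 R t) (freeAfter_subset _ _ _ _) ⟨a t, haA⟩
    obtain ⟨hxHmem, hxHrk⟩ :=
      hmin (σ.getD t 0) (freeAfter S c1 Hs t) (freeAfter_subset _ _ _ _) ⟨h t, hhH⟩
    have hgA := hmatchA t ht1
    have hgH := hmatchH t h1 ht1
    set r := σ.getD t 0 with hrdef
    set xA := f r (freeAfter S c1 R t) with hxAdef
    set xH := f r (freeAfter S c1 Hs t) with hxHdef
    have hA1 : freeAfter S c1 R (t+1) = (freeAfter S c1 R t).erase xA := by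
      rw [hstepA t ht1, hgA]
    have hH1 : freeAfter S c1 Hs (t+1) = (freeAfter S c1 Hs t).erase xH := by
      rw [hstepH t ht1, hgH]
    have hsubU : freeAfter S c1 R (t+1) ∪ freeAfter S c1 Hs (t+1) ⊆
        freeAfter S c1 R t ∪ freeAfter S c1 Hs t := by
      rw [hA1, hH1]
      exact Finset.union_subset_union (Finset.erase_subset _ _) (Finset.erase_subset _ _)
    by_cases hxx : xA = xH
    · -- both algorithms choose the same server
      have hxAH : xA ∈ freeAfter S c1 Hs t := hxx ▸ hxHmem
      have hxAa : xA ≠ a t := fun e => haH (e ▸ hxAH)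
      have hxAh : xA ≠ h t := fun e => hhA (e ▸ hxAmem)
      have hda : freeAfter S c1 R (t+1) \ freeAfter S c1 Hs (t+1) = {a t} := by
        rw [hA1, hH1, ← hxx]
        ext y
        simp only [Finset.mem_sdiff, Finset.mem_erase, Finset.mem_singleton]
        constructor
        · rintro ⟨⟨hyx, hyA⟩, hcon⟩
          by_cases hyH : y ∈ freeAfter S c1 Hs t
          · exact absurd ⟨hyx, hyH⟩ hcon
          · exact hchar1 y hyA hyH
        · rintro rfl
          exact ⟨⟨fun e => hxAa e.symm, haA⟩, fun hc => haH hc.2⟩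
      have hdh : freeAfter S c1 Hs (t+1) \ freeAfter S c1 R (t+1) = {h t} := by
        rw [hA1, hH1, ← hxx]
        ext y
        simp only [Finset.mem_sdiff, Finset.mem_erase, Finset.mem_singleton]
        constructor
        · rintro ⟨⟨hyx, hyH⟩, hcon⟩
          by_cases hyA : y ∈ freeAfter S c1 R t
          · exact absurd ⟨hyx, hyA⟩ hcon
          · exact hchar2 y hyH hyA
        · rintro rfl
          exact ⟨⟨fun e => hxAh e.symm, hhH⟩, fun hc => hhA hc.2⟩
      have haeq : a (t+1) = a t := Finset.singleton_injective (e1'.symm.trans hda)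
      have hheq : h (t+1) = h t := Finset.singleton_injective (e2'.symm.trans hdh)
      refine ⟨?_, ?_, ?_⟩
      · intro y hy hya hyh
        rw [haeq] at hya
        rw [hheq] at hyh
        rw [haeq, hheq]
        exact hInv y (hsubU hy) hya hyh
      · intro hlt
        rw [haeq, hheq]
        exact ⟨le_refl _, le_refl _, hlt⟩
      · intro hlt
        rw [haeq, hheq]
        exact ⟨le_refl _, le_refl _, hlt⟩
    · -- the two algorithms choose different servers
      have key : (xA = a t ∧ xH ≠ h t) ∨ (xH = h t ∧ xA ≠ a t) := by
        by_cases k1 : xA = a t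
        · left
          refine ⟨k1, fun k2 => ?_⟩
          have hCA : freeAfter S c1 R (t+1) = freeAfter S c1 R t ∩ freeAfter S c1 Hs t := by
            rw [hA1, k1]
            ext y
            simp only [Finset.mem_erase, Finset.mem_inter]
            constructor
            · rintro ⟨hy1, hy2⟩
              refine ⟨hy2, ?_⟩
              by_contra hc
              exact hy1 (hchar1 y hy2 hc)
            · rintro ⟨hy1, hy2⟩
              exact ⟨fun e => haH (e ▸ hy2), hy1⟩
          have hCH : freeAfter S c1 Hs (t+1) = freeAfter S c1 R t ∩ freeAfter S c1 Hs t := by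
            rw [hH1, k2]
            ext y
            simp only [Finset.mem_erase, Finset.mem_inter]
            constructor
            · rintro ⟨hy1, hy2⟩
              refine ⟨?_, hy2⟩
              by_contra hc
              exact hy1 (hchar2 y hy2 hc)
            · rintro ⟨hy1, hy2⟩
              exact ⟨fun e => hhA (e ▸ hy1), hy2⟩
          have hcon : ({a (t+1)} : Finset ℝ) = ∅ := by
            rw [← e1', hCA, hCH, Finset.sdiff_self]
          simp at hcon
        · right
          refine ⟨?_, k1⟩
          by_contra k2
          have m1 : xA ∈ freeAfter S c1 Hs t := by
            by_contra hc
            exact k1 (hchar1 _ hxAmem hc)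
          have m2 : xH ∈ freeAfter S c1 R t := by
            by_contra hc
            exact k2 (hchar2 _ hxHmem hc)
          have r1 : rank r xA ≤ rank r xH := hxArk xH m2
          have r2 : rank r xH ≤ rank r xA := hxHrk xA m1
          exact hxx (hinj r (freeAfter_subset S c1 R t hxAmem)
            (freeAfter_subset S c1 Hs t hxHmem) (le_antisymm r1 r2))
      rcases key with ⟨k1, k2⟩ | ⟨k2, k1⟩
      · -- A takes a t, the hybrid takes xH which stays free for A
        have m2 : xH ∈ freeAfter S c1 R t := by
          by_contra hc
          exact k2 (hchar2 _ hxHmem hc)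
        have hxHa : xH ≠ a t := fun e => haH (e ▸ hxHmem)
        have hda : freeAfter S c1 R (t+1) \ freeAfter S c1 Hs (t+1) = {xH} := by
          rw [hA1, hH1, k1]
          ext y
          simp only [Finset.mem_sdiff, Finset.mem_erase, Finset.mem_singleton]
          constructor
          · rintro ⟨⟨hy1, hy2⟩, hcon⟩
            by_cases hyH : y ∈ freeAfter S c1 Hs t
            · by_contra hyx
              exact hcon ⟨hyx, hyH⟩
            · exact absurd (hchar1 y hy2 hyH) hy1
          · rintro rfl
            exact ⟨⟨hxHa, m2⟩, fun hc => hc.1 rfl⟩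
        have hdh : freeAfter S c1 Hs (t+1) \ freeAfter S c1 R (t+1) = {h t} := by
          rw [hA1, hH1, k1]
          ext y
          simp only [Finset.mem_sdiff, Finset.mem_erase, Finset.mem_singleton]
          constructor
          · rintro ⟨⟨hy1, hy2⟩, hcon⟩
            by_cases hyA : y ∈ freeAfter S c1 R t
            · have : y = a t := by
                by_contra hc
                exact hcon ⟨hc, hyA⟩
              exact absurd (this ▸ hy2) haH
            · exact hchar2 y hy2 hyA
          · rintro rfl
            exact ⟨⟨fun e => k2 e.symm, hhH⟩, fun hc => hhA hc.2⟩
        have haeq : a (t+1) = xH := Finset.singleton_injective (e1'.symm.trans hda)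
        have hheq : h (t+1) = h t := Finset.singleton_injective (e2'.symm.trans hdh)
        have hg := geom S f rank hinj hmin hsurr (freeAfter S c1 R t) (freeAfter S c1 Hs t)
          (freeAfter_subset _ _ _ _) (freeAfter_subset _ _ _ _) (a t) (h t) r e1 e2 hInv
          (by rw [← hxAdef]; exact k1) (by rw [← hxHdef]; exact k2)
        rw [← hxHdef] at hg
        have hnota : ∀ y ∈ freeAfter S c1 R (t+1) ∪ freeAfter S c1 Hs (t+1), y ≠ a t := by
          intro y hy
          rintro rfl
          rcases Finset.mem_union.1 hy with hc | hc
          · rw [hA1, k1] at hc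
            exact Finset.notMem_erase _ _ hc
          · exact haH (Finset.mem_of_mem_erase (hH1 ▸ hc))
        have hne2 : a t ≠ h t := fun e => hhA (e ▸ haA)
        refine ⟨?_, ?_, ?_⟩
        · intro y hy hya hyh hcon
          rw [haeq] at hya
          rw [hheq] at hyh
          rw [haeq, hheq] at hcon
          have hyU := hsubU hy
          have hyna := hnota y hy
          rcases lt_trichotomy (a t) (h t) with hlt | heq0 | hlt
          · obtain ⟨hxlt, hginv⟩ := hg.1 hlt
            rw [min_eq_left (by linarith), max_eq_right (by linarith)] at hcon
            exact hginv y hyU hya hyh hyna hcon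
          · exact hne2 heq0
          · obtain ⟨hxgt, hginv⟩ := hg.2 hlt
            rw [min_eq_right (by linarith), max_eq_left (by linarith)] at hcon
            exact hginv y hyU hya hyh hyna hcon
        · intro hlt
          obtain ⟨hxlt, -⟩ := hg.1 hlt
          rw [haeq, hheq]
          exact ⟨le_of_lt hxlt, le_refl _, by linarith⟩
        · intro hlt
          obtain ⟨hxgt, -⟩ := hg.2 hlt
          rw [haeq, hheq]
          exact ⟨le_refl _, le_of_lt hxgt, by linarith⟩
      · -- the hybrid takes h t, A takes xA which stays free for the hybrid
        have m2 : xA ∈ freeAfter S c1 Hs t := by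
          by_contra hc
          exact k1 (hchar1 _ hxAmem hc)
        have hxAh : xA ≠ h t := fun e => hhA (e ▸ hxAmem)
        have hda : freeAfter S c1 R (t+1) \ freeAfter S c1 Hs (t+1) = {a t} := by
          rw [hA1, hH1, k2]
          ext y
          simp only [Finset.mem_sdiff, Finset.mem_erase, Finset.mem_singleton]
          constructor
          · rintro ⟨⟨hy1, hy2⟩, hcon⟩
            by_cases hyH : y ∈ freeAfter S c1 Hs t
            · have : y = h t := by
                by_contra hc
                exact hcon ⟨hc, hyH⟩
              exact absurd (this ▸ hy2) hhA
            · exact hchar1 y hy2 hyH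
          · rintro rfl
            exact ⟨⟨fun e => k1 e.symm, haA⟩, fun hc => haH hc.2⟩
        have hdh : freeAfter S c1 Hs (t+1) \ freeAfter S c1 R (t+1) = {xA} := by
          rw [hA1, hH1, k2]
          ext y
          simp only [Finset.mem_sdiff, Finset.mem_erase, Finset.mem_singleton]
          constructor
          · rintro ⟨⟨hy1, hy2⟩, hcon⟩
            by_cases hyA : y ∈ freeAfter S c1 R t
            · by_contra hyx
              exact hcon ⟨hyx, hyA⟩
            · exact absurd (hchar2 y hy2 hyA) hy1
          · rintro rfl
            exact ⟨⟨hxAh, m2⟩, fun hc => hc.1 rfl⟩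
        have haeq : a (t+1) = a t := Finset.singleton_injective (e1'.symm.trans hda)
        have hheq : h (t+1) = xA := Finset.singleton_injective (e2'.symm.trans hdh)
        have hinv' : ∀ y ∈ freeAfter S c1 Hs t ∪ freeAfter S c1 R t, y ≠ h t → y ≠ a t →
            ¬(min (h t) (a t) < y ∧ y < max (h t) (a t)) := by
          intro y hy hy1 hy2
          rw [min_comm, max_comm]
          exact hInv y (by rwa [Finset.union_comm]) hy2 hy1
        have hg := geom S f rank hinj hmin hsurr (freeAfter S c1 Hs t) (freeAfter S c1 R t)
          (freeAfter_subset _ _ _ _) (freeAfter_subset _ _ _ _) (h t) (a t) r e2 e1 hinv'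
          (by rw [← hxHdef]; exact k2) (by rw [← hxAdef]; exact k1)
        rw [← hxAdef] at hg
        have hnoth : ∀ y ∈ freeAfter S c1 R (t+1) ∪ freeAfter S c1 Hs (t+1), y ≠ h t := by
          intro y hy
          rintro rfl
          rcases Finset.mem_union.1 hy with hc | hc
          · exact hhA (Finset.mem_of_mem_erase (hA1 ▸ hc))
          · rw [hH1, k2] at hc
            exact Finset.notMem_erase _ _ hc
        have hne2 : a t ≠ h t := fun e => hhA (e ▸ haA)
        refine ⟨?_, ?_, ?_⟩
        · intro y hy hya hyh hcon
          rw [haeq] at hya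
          rw [hheq] at hyh
          rw [haeq, hheq] at hcon
          have hyU : y ∈ freeAfter S c1 Hs t ∪ freeAfter S c1 R t := by
            rw [Finset.union_comm]
            exact hsubU hy
          have hynh := hnoth y hy
          rcases lt_trichotomy (a t) (h t) with hlt | heq0 | hlt
          · obtain ⟨hxgt, hginv⟩ := hg.2 hlt
            rw [min_eq_left (by linarith), max_eq_right (by linarith)] at hcon
            exact hginv y hyU hyh hya hynh hcon
          · exact hne2 heq0
          · obtain ⟨hxlt, hginv⟩ := hg.1 hlt
            rw [min_eq_right (by linarith), max_eq_left (by linarith)] at hcon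
            exact hginv y hyU hyh hya hynh hcon
        · intro hlt
          obtain ⟨hxgt, -⟩ := hg.2 hlt
          rw [haeq, hheq]
          exact ⟨le_refl _, le_of_lt hxgt, by linarith⟩
        · intro hlt
          obtain ⟨hxlt, -⟩ := hg.1 hlt
          rw [haeq, hheq]
          exact ⟨le_of_lt hxlt, le_refl _, by linarith⟩
  have aux : ∀ n, i + n ≤ tstar →
      ((∀ y ∈ freeAfter S c1 R (i+n) ∪ freeAfter S c1 Hs (i+n), y ≠ a (i+n) → y ≠ h (i+n) →
        ¬(min (a (i+n)) (h (i+n)) < y ∧ y < max (a (i+n)) (h (i+n)))) ∧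
       (a i < h i → a (i+n) < h (i+n)) ∧ (h i < a i → h (i+n) < a (i+n))) := by
    intro n
    induction n with
    | zero => exact fun _ => ⟨hbase, fun hlt => hlt, fun hlt => hlt⟩
    | succ n ih =>
      intro hle
      have hle' : i + n ≤ tstar := by omega
      obtain ⟨ihInv, ih1, ih2⟩ := ih hle'
      have hs := hstep (i+n) (by omega) (by omega) ihInv
      exact ⟨hs.1, fun hlt => (hs.2.1 (ih1 hlt)).2.2, fun hlt => (hs.2.2 (ih2 hlt)).2.2⟩
  constructor
  · intro t h1 h2
    have h3 := (aux (t - i) (by omega)).1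
    rwa [Nat.add_sub_cancel' h1] at h3
  · rcases lt_trichotomy (a i) (h i) with hlt | heq0 | hlt
    · left
      refine ⟨hlt, fun t h1 h2 => ?_⟩
      obtain ⟨ihInv, ih1, -⟩ := aux (t - i) (by omega)
      rw [Nat.add_sub_cancel' h1] at ihInv ih1
      have hs := hstep t h1 h2 ihInv
      obtain ⟨hm1, hm2, -⟩ := hs.2.1 (ih1 hlt)
      exact ⟨hm1, hm2⟩
    · exact absurd heq0 hne'
    · right
      refine ⟨hlt, fun t h1 h2 => ?_⟩
      obtain ⟨ihInv, -, ih2⟩ := aux (t - i) (by omega)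
      rw [Nat.add_sub_cancel' h1] at ihInv ih2
      have hs := hstep t h1 h2 ihInv
      obtain ⟨hm1, hm2, -⟩ := hs.2.2 (ih2 hlt)
      exact ⟨hm1, hm2⟩

end OFAL
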